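/- Let σ, ν be Minkowski velocities with ⟨σ,ν+σ⟩ ≠ 0. Then the passive covariant Lorentz boost is a Lorentz transformation, i.e. it preserves the Minkowski bilinear form: for all μ₁, μ₂ ∈ ℝ⁴, ⟨Lp(σ,ν)μ₁, Lp(σ,ν)μ₂⟩ = ⟨μ₁, μ₂⟩. -/
import Mathlib

noncomputable section

/-- Minkowski bilinear form on ℝ⁴ with signature +−−−. -/
def mink (u v : Fin 4 → ℝ) : ℝ := u 0 * v 0 - u 1 * v 1 - u 2 * v 2 - u 3 * v 3

/-- Passive covariant Lorentz boost determined by Minkowski velocities σ, ν. -/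
def Lp (c : ℝ) (σ ν μ : Fin 4 → ℝ) : Fin 4 → ℝ :=
  μ - (mink μ (ν + σ) / mink σ (ν + σ)) • (ν + σ) + (2 * mink μ ν / c ^ 2) • σ

lemma mink_symm (u v : Fin 4 → ℝ) : mink u v = mink v u := by unfold mink; ring

lemma mink_add_left (u v w : Fin 4 → ℝ) : mink (u + v) w = mink u w + mink v w := by
  unfold mink; simp [Pi.add_apply]; ring

lemma mink_add_right (u v w : Fin 4 → ℝ) : mink u (v + w) = mink u v + mink u w := by
  unfold mink; simp [Pi.add_apply]; ring

lemma mink_sub_left (u v w : Fin 4 → ℝ) : mink (u - v) w = mink u w - mink v w := by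
  unfold mink; simp [Pi.sub_apply]; ring

lemma mink_sub_right (u v w : Fin 4 → ℝ) : mink u (v - w) = mink u v - mink u w := by
  unfold mink; simp [Pi.sub_apply]; ring

lemma mink_neg_right (u w : Fin 4 → ℝ) : mink u (-w) = - mink u w := by
  unfold mink; simp [Pi.neg_apply]; ring

lemma mink_smul_left (a : ℝ) (u w : Fin 4 → ℝ) : mink (a • u) w = a * mink u w := by
  unfold mink; simp [Pi.smul_apply, smul_eq_mul]; ring

lemma mink_smul_right (a : ℝ) (u w : Fin 4 → ℝ) : mink u (a • w) = a * mink u w := by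
  unfold mink; simp [Pi.smul_apply, smul_eq_mul]; ring

theorem boost_preserves_form (c : ℝ) (hc : 0 < c) (σ ν : Fin 4 → ℝ)
    (hσ : mink σ σ = c ^ 2) (hν : mink ν ν = c ^ 2)
    (hσνσ : mink σ (ν + σ) ≠ 0) :
    ∀ μ₁ μ₂ : Fin 4 → ℝ, mink (Lp c σ ν μ₁) (Lp c σ ν μ₂) = mink μ₁ μ₂ := by
  intro μ₁ μ₂
  have hc2 : (c:ℝ) ^ 2 ≠ 0 := pow_ne_zero 2 hc.ne'
  have hB : mink σ (ν + σ) = mink σ ν + c ^ 2 := by rw [mink_add_right, hσ]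
  have hBne : mink σ ν + c ^ 2 ≠ 0 := hB ▸ hσνσ
  simp only [Lp, mink_add_left, mink_sub_left, mink_smul_left, mink_add_right,
    mink_smul_right, mink_sub_right, mink_neg_right, hB, hσ, hν,
    mink_symm ν μ₂, mink_symm σ μ₂, mink_symm ν σ]
  field_simp
  ring
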